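/- Computation Lemma for ≃_R: Let Γ = (C, A, Δ) be a normed BPA system, R ⊆ C_G, and let α, α', α'' be processes in R-normal-form. If α ⟹_R α' ⟹_R α'' and α ≃_R α'', then α' ≃_R α. -/

import Mathlib

open Relation

/-- A BPA system over constants `C` and actions `A`: a distinguished silent
action `tau`, and a finite set of transition rules `X —ℓ→ α`, where `C` and
`A` are finite. -/
structure BPA (C A : Type) where
  tau : A
  rules : Set (C × A × List C)
  finC : Finite C
  finA : Finite A
  finRules : rules.Finite

namespace BPA

variable {C A : Type}

/-- One-step labelled transition between processes.  Processes are strings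
over `C` (lists, with the leftmost constant acting first). -/
def Step (Γ : BPA C A) (ℓ : A) (p q : List C) : Prop :=
  ∃ X γ β, (X, ℓ, γ) ∈ Γ.rules ∧ p = X :: β ∧ q = γ ++ β

/-- A transition carrying an arbitrary label. -/
def AnyStep (Γ : BPA C A) (p q : List C) : Prop := ∃ ℓ, Γ.Step ℓ p q

/-- `⟹` : the reflexive transitive closure of silent steps. -/
def TauStar (Γ : BPA C A) : List C → List C → Prop := ReflTransGen (Γ.Step Γ.tau)

/-- A process is normed if it can reach the empty process `ε`. -/
def NormedProc (Γ : BPA C A) (p : List C) : Prop := ReflTransGen Γ.AnyStep p []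

/-- The BPA system is normed. -/
def Normed (Γ : BPA C A) : Prop := ∀ X : C, Γ.NormedProc [X]

/-- A chain of `s`-steps starting at `start` in which every visited state is
related by `r` to the process `anchor`. -/
def RelChain (s : List C → List C → Prop) (r : List C → List C → Prop)
    (anchor : List C) : List C → List C → Prop :=
  ReflTransGen fun x y => s x y ∧ r anchor y

/-- Branching bisimulation (an equivalence relation by convention). -/
def IsBranchingBisim (Γ : BPA C A) (r : List C → List C → Prop) : Prop :=
  Equivalence r ∧ ∀ α β, r α β →
    ((∀ a, a ≠ Γ.tau → ∀ α', Γ.Step a α α' →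
        ∃ β'' β', RelChain (Γ.Step Γ.tau) r β β β'' ∧ Γ.Step a β'' β' ∧ r α' β') ∧
     (∀ α', Γ.Step Γ.tau α α' → ¬ r α α' →
        ∃ β'' β', RelChain (Γ.Step Γ.tau) r β β β'' ∧ Γ.Step Γ.tau β'' β' ∧
          ¬ r β'' β' ∧ r α' β'))

/-- Branching bisimilarity `≃` : the largest branching bisimulation. -/
def Bisim (Γ : BPA C A) (α β : List C) : Prop :=
  ∃ r, Γ.IsBranchingBisim r ∧ r α β

/-- A ground process: it can silently reach `ε`. -/
def Ground (Γ : BPA C A) (p : List C) : Prop := Γ.TauStar p []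

/-- The set `C_G` of ground constants. -/
def GroundC (Γ : BPA C A) : Set C := {X | Γ.Ground [X]}

/-- `R`-equality `=_R`: the two processes differ only in suffixes over `R`. -/
def REq (R : Set C) (α β : List C) : Prop :=
  ∃ ζ a b, α = ζ ++ a ∧ β = ζ ++ b ∧ (∀ X ∈ a, X ∈ R) ∧ (∀ X ∈ b, X ∈ R)

open Classical in
/-- The `R`-normal form `α_R` of a process: delete the maximal suffix over `R`. -/
noncomputable def nf (R : Set C) (α : List C) : List C :=
  (α.reverse.dropWhile fun X => decide (X ∈ R)).reverse

/-- A process is in `R`-normal form. -/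
def InNF (R : Set C) (α : List C) : Prop := nf R α = α

/-- The `R`-transition relation `—ℓ→_R` between `R`-normal forms. -/
def StepR (Γ : BPA C A) (R : Set C) (ℓ : A) (ζ η : List C) : Prop :=
  ∃ α β, ζ = nf R α ∧ η = nf R β ∧ Γ.Step ℓ α β

/-- `⟹_R`. -/
def TauStarR (Γ : BPA C A) (R : Set C) : List C → List C → Prop :=
  ReflTransGen (Γ.StepR R Γ.tau)

/-- `R`-bisimulation: an equivalence relation containing `=_R` satisfying
ground preservation and the relativized branching transfer conditions. -/
def IsRBisim (Γ : BPA C A) (R : Set C) (r : List C → List C → Prop) : Prop :=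
  Equivalence r ∧ (∀ α β, REq R α β → r α β) ∧
  ∀ α β, r α β →
    ((Γ.TauStar α [] → Γ.TauStar β []) ∧
     (∀ α', Γ.Step Γ.tau α α' → ¬ r α α' →
        ∃ β'' β', RelChain (Γ.StepR R Γ.tau) r β (nf R β) β'' ∧
          Γ.StepR R Γ.tau β'' β' ∧ ¬ r β'' β' ∧ r α' β') ∧
     (∀ a, a ≠ Γ.tau → ∀ α', Γ.Step a α α' →
        ∃ β'' β', RelChain (Γ.StepR R Γ.tau) r β (nf R β) β'' ∧
          Γ.StepR R a β'' β' ∧ r α' β'))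

/-- `R`-bisimilarity `≃_R` : the largest `R`-bisimulation. -/
def RBisim (Γ : BPA C A) (R : Set C) (α β : List C) : Prop :=
  ∃ r, Γ.IsRBisim R r ∧ r α β

/-- `Id_R = {X ∈ C : X ≃_R ε}`. -/
def IdR (Γ : BPA C A) (R : Set C) : Set C := {X | Γ.RBisim R [X] []}

/-- `Rd_R(γ) = {X ∈ C : Xγ ≃_R γ}`. -/
def RdR (Γ : BPA C A) (R : Set C) (γ : List C) : Set C :=
  {X | Γ.RBisim R (X :: γ) γ}

/-- An admissible reference set: `R = Id_R`. -/
def Admissible (Γ : BPA C A) (R : Set C) : Prop := R = Γ.IdR R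

end BPA


section Aux

namespace BPA

open Relation List

variable {C A : Type}

open Classical in
private lemma dropWhile_idem (p : C → Bool) (l : List C) :
    (l.dropWhile p).dropWhile p = l.dropWhile p := by
  induction l with
  | nil => rfl
  | cons a l ih => by_cases h : p a <;> simp [List.dropWhile_cons, h, ih]

open Classical in
lemma nf_exists (R : Set C) (α : List C) :
    ∃ b, (∀ X ∈ b, X ∈ R) ∧ α = nf R α ++ b := by
  refine ⟨(α.reverse.takeWhile fun X => decide (X ∈ R)).reverse, ?_, ?_⟩
  · intro X hX
    rw [List.mem_reverse] at hX
    exact of_decide_eq_true (List.mem_takeWhile_imp (p := fun X => decide (X ∈ R)) hX)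
  · show α = (α.reverse.dropWhile fun X => decide (X ∈ R)).reverse ++
      (α.reverse.takeWhile fun X => decide (X ∈ R)).reverse
    rw [← List.reverse_append, List.takeWhile_append_dropWhile, List.reverse_reverse]

open Classical in
lemma inNF_nf (R : Set C) (α : List C) : InNF R (nf R α) := by
  show nf R (nf R α) = nf R α
  show (((α.reverse.dropWhile fun X => decide (X ∈ R)).reverse).reverse.dropWhile
      fun X => decide (X ∈ R)).reverse = _
  rw [List.reverse_reverse, dropWhile_idem]
  rfl

lemma stepR_target_nf {Γ : BPA C A} {R : Set C} {ℓ : A} {ζ η : List C}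
    (h : Γ.StepR R ℓ ζ η) : InNF R η := by
  obtain ⟨μ, ν, -, rfl, -⟩ := h
  exact inNF_nf R ν

lemma req_nf (R : Set C) (α : List C) : REq R α (nf R α) := by
  obtain ⟨b, hb, hab⟩ := nf_exists R α
  exact ⟨nf R α, b, [], hab, (List.append_nil _).symm, hb, by simp⟩

lemma Step.append_right {Γ : BPA C A} {ℓ : A} {p q : List C} (h : Γ.Step ℓ p q) (s : List C) :
    Γ.Step ℓ (p ++ s) (q ++ s) := by
  obtain ⟨X, γ, β, hr, rfl, rfl⟩ := h
  exact ⟨X, γ, β ++ s, hr, rfl, by rw [List.append_assoc]⟩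

lemma tauStar_append_right {Γ : BPA C A} {p q : List C}
    (h : Relation.ReflTransGen (Γ.Step Γ.tau) p q) (s : List C) :
    Relation.ReflTransGen (Γ.Step Γ.tau) (p ++ s) (q ++ s) :=
  Relation.ReflTransGen.lift (· ++ s) (fun _ _ (hab : Γ.Step Γ.tau _ _) => hab.append_right s) _ _ h

lemma ground_append {Γ : BPA C A} {p q : List C}
    (hp : Relation.ReflTransGen (Γ.Step Γ.tau) p [])
    (hq : Relation.ReflTransGen (Γ.Step Γ.tau) q []) :
    Relation.ReflTransGen (Γ.Step Γ.tau) (p ++ q) [] :=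
  Relation.ReflTransGen.trans (tauStar_append_right hp q) hq

lemma ground_of_append {Γ : BPA C A} :
    ∀ {z : List C}, Relation.ReflTransGen (Γ.Step Γ.tau) z [] →
      ∀ p q : List C, z = p ++ q → Relation.ReflTransGen (Γ.Step Γ.tau) p [] := by
  intro z h
  induction h using Relation.ReflTransGen.head_induction_on with
  | refl =>
    rintro p q hz
    obtain ⟨rfl, rfl⟩ := List.append_eq_nil_iff.mp hz.symm
    exact .refl
  | head hstep _ ih =>
    intro p q hz
    match p, hz with
    | [], _ => exact .refl
    | X :: p₀, hz =>
      subst hz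
      obtain ⟨Y, γ, β, hr, he, rfl⟩ := hstep
      rw [List.cons_append] at he
      injection he with h1 h2
      subst h1; subst h2
      have := ih (γ ++ p₀) q (by rw [List.append_assoc])
      exact Relation.ReflTransGen.head ⟨X, γ, p₀, hr, rfl, rfl⟩ this

lemma ground_of_mem {Γ : BPA C A} {R : Set C} (hR : R ⊆ Γ.GroundC) :
    ∀ {b : List C}, (∀ X ∈ b, X ∈ R) → Relation.ReflTransGen (Γ.Step Γ.tau) b []
  | [], _ => .refl
  | X :: t, hb => by
    have h1 : Relation.ReflTransGen (Γ.Step Γ.tau) [X] [] := hR (hb X (by simp))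
    have h2 := ground_of_mem hR (b := t) (fun Y hY => hb Y (by simp [hY]))
    exact ground_append (p := [X]) (q := t) h1 h2

lemma ground_nf_iff {Γ : BPA C A} {R : Set C} (hR : R ⊆ Γ.GroundC) (α : List C) :
    Relation.ReflTransGen (Γ.Step Γ.tau) (nf R α) [] ↔
      Relation.ReflTransGen (Γ.Step Γ.tau) α [] := by
  obtain ⟨b, hb, hab⟩ := nf_exists R α
  constructor
  · intro h
    rw [hab]
    exact ground_append h (ground_of_mem hR hb)
  · intro h
    exact ground_of_append h (nf R α) b hab

lemma stepR_ground_back {Γ : BPA C A} {R : Set C} (hR : R ⊆ Γ.GroundC) {ζ η : List C}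
    (h : Γ.StepR R Γ.tau ζ η) (hg : Relation.ReflTransGen (Γ.Step Γ.tau) η []) :
    Relation.ReflTransGen (Γ.Step Γ.tau) ζ [] := by
  obtain ⟨μ, ν, rfl, rfl, hst⟩ := h
  rw [ground_nf_iff hR] at hg ⊢
  exact Relation.ReflTransGen.head hst hg

lemma tauStarR_ground_back {Γ : BPA C A} {R : Set C} (hR : R ⊆ Γ.GroundC) :
    ∀ {u v : List C}, Relation.ReflTransGen (Γ.StepR R Γ.tau) u v →
      Relation.ReflTransGen (Γ.Step Γ.tau) v [] →
      Relation.ReflTransGen (Γ.Step Γ.tau) u [] := by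
  intro u v h
  induction h using Relation.ReflTransGen.head_induction_on with
  | refl => exact id
  | head hstep _ ih => exact fun hg => stepR_ground_back hR hstep (ih hg)

/-- Chains of `R`-silent steps all of whose visited states satisfy `E`. -/
abbrev ECh (Γ : BPA C A) (R : Set C) (E : List C → Prop) : List C → List C → Prop :=
  Relation.ReflTransGen fun u v => Γ.StepR R Γ.tau u v ∧ E v

lemma ECh_E {Γ : BPA C A} {R : Set C} {E : List C → Prop} {p w : List C}
    (h : ECh Γ R E p w) (hp : E p) : E w := by
  rcases Relation.ReflTransGen.cases_tail h with he | ⟨c, _, hc⟩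
  · exact he ▸ hp
  · exact hc.2

variable {Γ : BPA C A} {R : Set C} {r₀ : List C → List C → Prop} {E : List C → Prop}

/-- Simulation of an `E`-chain from `p` by a process `r₀`-related to `p`. -/
lemma sim (hB : Γ.IsRBisim R r₀) (hE : ∀ ⦃x y : List C⦄, r₀ x y → E x → E y)
    {p w : List C} (hpw : ECh Γ R E p w) (hEp : E p) :
    ∀ {z : List C}, r₀ p z → InNF R z →
      ∃ z', ECh Γ R E z z' ∧ r₀ w z' ∧ InNF R z' := by
  induction hpw with
  | refl => exact fun hpz hz => ⟨_, .refl, hpz, hz⟩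
  | @tail w₁ w₂ h hstep ih =>
    intro z hpz hz
    obtain ⟨z₁, hzz₁, hw₁z₁, hz₁⟩ := ih hpz hz
    obtain ⟨hsR, hEw₂⟩ := hstep
    obtain ⟨μ, ν, hμ, hν, hst⟩ := hsR
    have hμw₁ : r₀ μ w₁ := hμ ▸ hB.2.1 _ _ (req_nf R μ)
    have hνw₂ : r₀ ν w₂ := hν ▸ hB.2.1 _ _ (req_nf R ν)
    by_cases hμν : r₀ μ ν
    · exact ⟨z₁, hzz₁,
        hB.1.trans (hB.1.symm hνw₂) (hB.1.trans (hB.1.symm hμν) (hB.1.trans hμw₁ hw₁z₁)), hz₁⟩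
    · have hμz₁ : r₀ μ z₁ := hB.1.trans hμw₁ hw₁z₁
      obtain ⟨β'', β', hc, hs, hnb, hνβ'⟩ := (hB.2.2 μ z₁ hμz₁).2.1 ν hst hμν
      rw [show nf R z₁ = z₁ from hz₁] at hc
      have hEw₁ : E w₁ := ECh_E h hEp
      have hEz₁ : E z₁ := hE hw₁z₁ hEw₁
      have hcE : ECh Γ R E z₁ β'' :=
        Relation.ReflTransGen.mono (fun u v hx => ⟨hx.1, hE hx.2 hEz₁⟩) _ _ hc
      have hEβ' : E β' := hE hνβ' (hE (hB.1.symm hνw₂) hEw₂)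
      exact ⟨β', Relation.ReflTransGen.tail (Relation.ReflTransGen.trans hzz₁ hcE) ⟨hs, hEβ'⟩,
        hB.1.trans (hB.1.symm hνw₂) hνβ', stepR_target_nf hs⟩

/-- Transfer of an `E`-exiting silent `R`-step across `r₀`. -/
lemma exit_tau (hB : Γ.IsRBisim R r₀) (hE : ∀ ⦃x y : List C⦄, r₀ x y → E x → E y)
    {w δ' ζ : List C} (hst : Γ.StepR R Γ.tau w δ') (hEw : E w) (hnE : ¬ E δ')
    (hwζ : r₀ w ζ) (hζ : InNF R ζ) :
    ∃ β'' β', ECh Γ R E ζ β'' ∧ Γ.StepR R Γ.tau β'' β' ∧ ¬ r₀ β'' β' ∧ ¬ E β' ∧ r₀ δ' β' := by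
  obtain ⟨μ, ν, rfl, rfl, hstp⟩ := hst
  have hμw : r₀ μ (nf R μ) := hB.2.1 _ _ (req_nf R μ)
  have hνδ : r₀ ν (nf R ν) := hB.2.1 _ _ (req_nf R ν)
  have hμζ : r₀ μ ζ := hB.1.trans hμw hwζ
  have hEζ : E ζ := hE hwζ hEw
  have hnμν : ¬ r₀ μ ν := fun h =>
    hnE (hE hνδ (hE h (hE (hB.1.symm hμw) hEw)))
  obtain ⟨β'', β', hc, hs, hnb, hνβ'⟩ := (hB.2.2 μ ζ hμζ).2.1 ν hstp hnμν
  rw [show nf R ζ = ζ from hζ] at hc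
  have hδβ' : r₀ (nf R ν) β' := hB.1.trans (hB.1.symm hνδ) hνβ'
  exact ⟨β'', β', Relation.ReflTransGen.mono (fun u v hx => ⟨hx.1, hE hx.2 hEζ⟩) _ _ hc, hs, hnb,
    fun h => hnE (hE (hB.1.symm hδβ') h), hδβ'⟩

/-- Transfer of a visible `R`-step across `r₀`. -/
lemma exit_vis (hB : Γ.IsRBisim R r₀) (hE : ∀ ⦃x y : List C⦄, r₀ x y → E x → E y)
    {a : A} (ha : a ≠ Γ.tau) {w δ' ζ : List C} (hst : Γ.StepR R a w δ') (hEw : E w)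
    (hwζ : r₀ w ζ) (hζ : InNF R ζ) :
    ∃ β'' β', ECh Γ R E ζ β'' ∧ Γ.StepR R a β'' β' ∧ r₀ δ' β' := by
  obtain ⟨μ, ν, rfl, rfl, hstp⟩ := hst
  have hμw : r₀ μ (nf R μ) := hB.2.1 _ _ (req_nf R μ)
  have hνδ : r₀ ν (nf R ν) := hB.2.1 _ _ (req_nf R ν)
  have hμζ : r₀ μ ζ := hB.1.trans hμw hwζ
  have hEζ : E ζ := hE hwζ hEw
  obtain ⟨β'', β', hc, hs, hνβ'⟩ := (hB.2.2 μ ζ hμζ).2.2 a ha ν hstp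
  rw [show nf R ζ = ζ from hζ] at hc
  exact ⟨β'', β', Relation.ReflTransGen.mono (fun u v hx => ⟨hx.1, hE hx.2 hEζ⟩) _ _ hc, hs,
    hB.1.trans (hB.1.symm hνδ) hνβ'⟩

/-- A (silent, `E`-exiting) response scenario reachable from `u` within `E`. -/
abbrev ExitT (Γ : BPA C A) (R : Set C) (E : List C → Prop) (r₀ : List C → List C → Prop)
    (x' u : List C) : Prop :=
  ∃ δ'' δ', ECh Γ R E u δ'' ∧ Γ.StepR R Γ.tau δ'' δ' ∧ ¬ E δ' ∧ r₀ x' δ'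

/-- A visible response scenario reachable from `u` within `E`. -/
abbrev ExitV (Γ : BPA C A) (R : Set C) (E : List C → Prop) (r₀ : List C → List C → Prop)
    (a : A) (x' u : List C) : Prop :=
  ∃ δ'' δ', ECh Γ R E u δ'' ∧ Γ.StepR R a δ'' δ' ∧ r₀ x' δ'

lemma exitT_transfer (hB : Γ.IsRBisim R r₀) (hE : ∀ ⦃x y : List C⦄, r₀ x y → E x → E y)
    {x' u v : List C} (huv : r₀ u v) (hEu : E u) (hv : InNF R v)
    (h : ExitT Γ R E r₀ x' u) : ExitT Γ R E r₀ x' v := by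
  obtain ⟨δ'', δ', hc, hs, hnE, hx'⟩ := h
  obtain ⟨z', hvz', hδz', hz'⟩ := sim hB hE hc hEu huv hv
  obtain ⟨β'', β', hc2, hs2, _, hnE2, hδβ'⟩ := exit_tau hB hE hs (ECh_E hc hEu) hnE hδz' hz'
  exact ⟨β'', β', Relation.ReflTransGen.trans hvz' hc2, hs2, hnE2, hB.1.trans hx' hδβ'⟩

lemma exitV_transfer (hB : Γ.IsRBisim R r₀) (hE : ∀ ⦃x y : List C⦄, r₀ x y → E x → E y)
    {a : A} (ha : a ≠ Γ.tau) {x' u v : List C} (huv : r₀ u v) (hEu : E u) (hv : InNF R v)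
    (h : ExitV Γ R E r₀ a x' u) : ExitV Γ R E r₀ a x' v := by
  obtain ⟨δ'', δ', hc, hs, hx'⟩ := h
  obtain ⟨z', hvz', hδz', hz'⟩ := sim hB hE hc hEu huv hv
  obtain ⟨β'', β', hc2, hs2, hδβ'⟩ := exit_vis hB hE ha hs (ECh_E hc hEu) hδz' hz'
  exact ⟨β'', β', Relation.ReflTransGen.trans hvz' hc2, hs2, hB.1.trans hx' hδβ'⟩

lemma exitT_back {x' u q : List C} (hst : Γ.StepR R Γ.tau u q) (hEq2 : E q)
    (h : ExitT Γ R E r₀ x' q) : ExitT Γ R E r₀ x' u := by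
  obtain ⟨δ'', δ', hc, hs, hnE, hx'⟩ := h
  exact ⟨δ'', δ', Relation.ReflTransGen.head ⟨hst, hEq2⟩ hc, hs, hnE, hx'⟩

lemma exitV_back {a : A} {x' u q : List C} (hst : Γ.StepR R Γ.tau u q) (hEq2 : E q)
    (h : ExitV Γ R E r₀ a x' q) : ExitV Γ R E r₀ a x' u := by
  obtain ⟨δ'', δ', hc, hs, hx'⟩ := h
  exact ⟨δ'', δ', Relation.ReflTransGen.head ⟨hst, hEq2⟩ hc, hs, hx'⟩

/-- The merged class: states `r₀`-related to some state on the path `α ⟹_R α''`. -/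
abbrev PathE (Γ : BPA C A) (R : Set C) (r₀ : List C → List C → Prop) (α α'' z : List C) : Prop :=
  ∃ p, (Relation.ReflTransGen (Γ.StepR R Γ.tau) α p ∧
        Relation.ReflTransGen (Γ.StepR R Γ.tau) p α'') ∧ r₀ z p

end BPA

end Aux

/-- **Computation Lemma for `≃_R`.**  For processes in `R`-normal form, if
`α ⟹_R α' ⟹_R α''` and `α ≃_R α''`, then `α' ≃_R α`. -/
theorem computation_lemma_R {C A : Type} (Γ : BPA C A) (hΓ : Γ.Normed)
    (R : Set C) (hR : R ⊆ Γ.GroundC) (α α' α'' : List C)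
    (hα : BPA.InNF R α) (hα' : BPA.InNF R α') (hα'' : BPA.InNF R α'')
    (h1 : Γ.TauStarR R α α') (h2 : Γ.TauStarR R α' α'')
    (h3 : Γ.RBisim R α α'') : Γ.RBisim R α' α := by
  obtain ⟨r₀, hB, h30⟩ := h3
  have h1' : Relation.ReflTransGen (Γ.StepR R Γ.tau) α α' := h1
  have h2' : Relation.ReflTransGen (Γ.StepR R Γ.tau) α' α'' := h2
  have hEq := hB.1
  have hReq := hB.2.1
  have hcond := hB.2.2
  -- closure of the merged class under r₀
  have hE : ∀ ⦃x y : List C⦄, r₀ x y → BPA.PathE Γ R r₀ α α'' x → BPA.PathE Γ R r₀ α α'' y := by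
    rintro x y hxy ⟨p, hp, hzp⟩
    exact ⟨p, hp, hEq.trans (hEq.symm hxy) hzp⟩
  have hEpath : ∀ {u : List C}, Relation.ReflTransGen (Γ.StepR R Γ.tau) α u →
      Relation.ReflTransGen (Γ.StepR R Γ.tau) u α'' → BPA.PathE Γ R r₀ α α'' u :=
    fun hu hv => ⟨_, ⟨hu, hv⟩, hEq.refl _⟩
  have hNF : ∀ u, Relation.ReflTransGen (Γ.StepR R Γ.tau) α u → BPA.InNF R u := by
    intro u hu
    rcases Relation.ReflTransGen.cases_tail hu with he | ⟨c, _, hc⟩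
    · exact he ▸ hα
    · exact BPA.stepR_target_nf hc
  -- propagation of scenarios backwards along the path
  have hbackT : ∀ (x' u v : List C), Relation.ReflTransGen (Γ.StepR R Γ.tau) u v →
      Relation.ReflTransGen (Γ.StepR R Γ.tau) α u →
      Relation.ReflTransGen (Γ.StepR R Γ.tau) v α'' →
      BPA.ExitT Γ R (BPA.PathE Γ R r₀ α α'') r₀ x' v →
      BPA.ExitT Γ R (BPA.PathE Γ R r₀ α α'') r₀ x' u := by
    intro x' u v huv
    induction huv using Relation.ReflTransGen.head_induction_on with
    | refl => exact fun _ _ h => h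
    | @head s c hstep hcv ih =>
      intro hs hv h
      have hc : Relation.ReflTransGen (Γ.StepR R Γ.tau) α c :=
        Relation.ReflTransGen.tail hs hstep
      exact BPA.exitT_back hstep (hEpath hc (Relation.ReflTransGen.trans hcv hv)) (ih hc hv h)
  have hbackV : ∀ (a : A) (x' u v : List C), Relation.ReflTransGen (Γ.StepR R Γ.tau) u v →
      Relation.ReflTransGen (Γ.StepR R Γ.tau) α u →
      Relation.ReflTransGen (Γ.StepR R Γ.tau) v α'' →
      BPA.ExitV Γ R (BPA.PathE Γ R r₀ α α'') r₀ a x' v →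
      BPA.ExitV Γ R (BPA.PathE Γ R r₀ α α'') r₀ a x' u := by
    intro a x' u v huv
    induction huv using Relation.ReflTransGen.head_induction_on with
    | refl => exact fun _ _ h => h
    | @head s c hstep hcv ih =>
      intro hs hv h
      have hc : Relation.ReflTransGen (Γ.StepR R Γ.tau) α c :=
        Relation.ReflTransGen.tail hs hstep
      exact BPA.exitV_back hstep (hEpath hc (Relation.ReflTransGen.trans hcv hv)) (ih hc hv h)
  -- the merged relation
  refine ⟨fun x y => r₀ x y ∨ (BPA.PathE Γ R r₀ α α'' x ∧ BPA.PathE Γ R r₀ α α'' y),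
    ⟨⟨fun x => Or.inl (hEq.refl x), ?_, ?_⟩, ?_, ?_⟩,
    Or.inr ⟨hEpath h1' h2', hEpath .refl (Relation.ReflTransGen.trans h1' h2')⟩⟩
  · rintro x y (h | ⟨hx, hy⟩)
    · exact Or.inl (hEq.symm h)
    · exact Or.inr ⟨hy, hx⟩
  · rintro x y z (hxy | ⟨hx, hy⟩) (hyz | ⟨hy', hz⟩)
    · exact Or.inl (hEq.trans hxy hyz)
    · exact Or.inr ⟨hE (hEq.symm hxy) hy', hz⟩
    · exact Or.inr ⟨hx, hE hyz hy⟩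
    · exact Or.inr ⟨hx, hz⟩
  · exact fun a b h => Or.inl (hReq a b h)
  · rintro x y hxy
    refine ⟨?_, ?_, ?_⟩
    · -- ground preservation
      intro hx
      rcases hxy with h | ⟨⟨p, hp, hxp⟩, ⟨q, hq, hyq⟩⟩
      · exact (hcond x y h).1 hx
      · have hgp : Γ.TauStar p [] := (hcond x p hxp).1 hx
        have hgα : Γ.TauStar α [] := BPA.tauStarR_ground_back hR hp.1 hgp
        have hgα'' : Γ.TauStar α'' [] := (hcond α α'' h30).1 hgα
        have hgq : Γ.TauStar q [] := BPA.tauStarR_ground_back hR hq.2 hgα''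
        exact (hcond q y (hEq.symm hyq)).1 hgq
    · -- silent transfer
      intro x' hst hnr
      have hnr0 : ¬ r₀ x x' := fun h => hnr (Or.inl h)
      have hnrE : ¬ (BPA.PathE Γ R r₀ α α'' x ∧ BPA.PathE Γ R r₀ α α'' x') :=
        fun h => hnr (Or.inr h)
      rcases hxy with hxy0 | ⟨hEx, hEy⟩
      · obtain ⟨β'', β', hc, hs, hnb, hrel⟩ := (hcond x y hxy0).2.1 x' hst hnr0
        refine ⟨β'', β',
          Relation.ReflTransGen.mono (fun u v hx => ⟨hx.1, Or.inl hx.2⟩) _ _ hc, hs, ?_,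
          Or.inl hrel⟩
        rintro (h | ⟨hb1, hb2⟩)
        · exact hnb h
        · have hyβ'' : r₀ y β'' := by
            rcases Relation.ReflTransGen.cases_tail hc with he | ⟨c, _, hcc⟩
            · exact he ▸ hB.2.1 _ _ (BPA.req_nf R y)
            · exact hcc.2
          exact hnrE ⟨hE (hEq.symm (hEq.trans hxy0 hyβ'')) hb1, hE (hEq.symm hrel) hb2⟩
      · obtain ⟨p, hp, hxp⟩ := id hEx
        have hEp : BPA.PathE Γ R r₀ α α'' p := ⟨p, hp, hEq.refl p⟩
        have hnEx' : ¬ BPA.PathE Γ R r₀ α α'' x' := fun h => hnrE ⟨hEx, h⟩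
        obtain ⟨β₀'', β₀', hc₀, hs₀, hn₀, hrel₀⟩ := (hcond x p hxp).2.1 x' hst hnr0
        rw [show BPA.nf R p = p from hNF p hp.1] at hc₀
        have hExitp : BPA.ExitT Γ R (BPA.PathE Γ R r₀ α α'') r₀ x' p :=
          ⟨β₀'', β₀', Relation.ReflTransGen.mono (fun u v hx => ⟨hx.1, hE hx.2 hEp⟩) _ _ hc₀, hs₀,
            fun h => hnEx' (hE (hEq.symm hrel₀) h), hrel₀⟩
        have hExitα := hbackT x' α p hp.1 .refl hp.2 hExitp
        have hExitα'' := BPA.exitT_transfer hB hE h30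
          (hEpath .refl (Relation.ReflTransGen.trans h1' h2')) hα'' hExitα
        obtain ⟨q, hq, hyq⟩ := id hEy
        have hExitq := hbackT x' q α'' hq.2 hq.1 .refl hExitα''
        obtain ⟨δ'', δ', hcq, hsq, hnEδ', hx'δ'⟩ := hExitq
        have hEqq : BPA.PathE Γ R r₀ α α'' q := ⟨q, hq, hEq.refl q⟩
        have hqny : r₀ q (BPA.nf R y) :=
          hEq.trans (hEq.symm hyq) (hB.2.1 _ _ (BPA.req_nf R y))
        obtain ⟨z', hnyz', hδ''z', hz'⟩ := BPA.sim hB hE hcq hEqq hqny (BPA.inNF_nf R y)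
        obtain ⟨β'', β', hc2, hs2, hn2, hnE2, hrel2⟩ :=
          BPA.exit_tau hB hE hsq (BPA.ECh_E hcq hEqq) hnEδ' hδ''z' hz'
        refine ⟨β'', β', ?_, hs2, ?_, Or.inl (hEq.trans hx'δ' hrel2)⟩
        · exact Relation.ReflTransGen.mono (fun u v hx => ⟨hx.1, Or.inr ⟨hEy, hx.2⟩⟩) _ _
            (Relation.ReflTransGen.trans hnyz' hc2)
        · rintro (h | ⟨_, hb⟩)
          · exact hn2 h
          · exact hnE2 hb
    · -- visible transfer
      intro a ha x' hst
      rcases hxy with hxy0 | ⟨hEx, hEy⟩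
      · obtain ⟨β'', β', hc, hs, hrel⟩ := (hcond x y hxy0).2.2 a ha x' hst
        exact ⟨β'', β',
          Relation.ReflTransGen.mono (fun u v hx => ⟨hx.1, Or.inl hx.2⟩) _ _ hc, hs, Or.inl hrel⟩
      · obtain ⟨p, hp, hxp⟩ := id hEx
        have hEp : BPA.PathE Γ R r₀ α α'' p := ⟨p, hp, hEq.refl p⟩
        obtain ⟨β₀'', β₀', hc₀, hs₀, hrel₀⟩ := (hcond x p hxp).2.2 a ha x' hst
        rw [show BPA.nf R p = p from hNF p hp.1] at hc₀
        have hExitp : BPA.ExitV Γ R (BPA.PathE Γ R r₀ α α'') r₀ a x' p :=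
          ⟨β₀'', β₀', Relation.ReflTransGen.mono (fun u v hx => ⟨hx.1, hE hx.2 hEp⟩) _ _ hc₀, hs₀,
            hrel₀⟩
        have hExitα := hbackV a x' α p hp.1 .refl hp.2 hExitp
        have hExitα'' := BPA.exitV_transfer hB hE ha h30
          (hEpath .refl (Relation.ReflTransGen.trans h1' h2')) hα'' hExitα
        obtain ⟨q, hq, hyq⟩ := id hEy
        have hExitq := hbackV a x' q α'' hq.2 hq.1 .refl hExitα''
        obtain ⟨δ'', δ', hcq, hsq, hx'δ'⟩ := hExitq
        have hEqq : BPA.PathE Γ R r₀ α α'' q := ⟨q, hq, hEq.refl q⟩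
        have hqny : r₀ q (BPA.nf R y) :=
          hEq.trans (hEq.symm hyq) (hB.2.1 _ _ (BPA.req_nf R y))
        obtain ⟨z', hnyz', hδ''z', hz'⟩ := BPA.sim hB hE hcq hEqq hqny (BPA.inNF_nf R y)
        obtain ⟨β'', β', hc2, hs2, hrel2⟩ :=
          BPA.exit_vis hB hE ha hsq (BPA.ECh_E hcq hEqq) hδ''z' hz'
        refine ⟨β'', β', ?_, hs2, Or.inl (hEq.trans hx'δ' hrel2)⟩
        exact Relation.ReflTransGen.mono (fun u v hx => ⟨hx.1, Or.inr ⟨hEy, hx.2⟩⟩) _ _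
          (Relation.ReflTransGen.trans hnyz' hc2)
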